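/- There exists a finite bipartite simple graph G whose DP-chromatic number is exactly 4: some 3-fold cover of G admits no coloring, while every 4-fold cover of G admits a coloring. -/

import Mathlib

open SimpleGraph

/-- A cover `(H, L)` of a simple graph `G` in the sense of Dvořák and Postle:
(C1) the sets `L u` partition the vertices of `H`;
(C2) each `L u` induces a complete subgraph of `H`;
(C3) edges of `H` between `L u` and `L v` (for `u ≠ v`) exist only when `uv ∈ E(G)`;
(C4) for every edge `uv` of `G`, the edges of `H` between `L u` and `L v` form a matching. -/
structure DPCover {V : Type*} {W : Type*} (G : SimpleGraph V) (H : SimpleGraph W) where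
  L : V → Finset W
  part : ∀ w : W, ∃! u : V, w ∈ L u
  clique : ∀ u : V, ∀ x ∈ L u, ∀ y ∈ L u, x ≠ y → H.Adj x y
  cross : ∀ u v : V, ∀ x ∈ L u, ∀ y ∈ L v, H.Adj x y → u = v ∨ G.Adj u v
  matching : ∀ u v : V, G.Adj u v → ∀ x ∈ L u, ∀ y ∈ L v, ∀ y' ∈ L v,
      H.Adj x y → H.Adj x y' → y = y'

/-- A cover is `k`-fold if every list `L u` has exactly `k` elements. -/
def DPCover.IsFold {V W : Type*} {G : SimpleGraph V} {H : SimpleGraph W}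
    (C : DPCover G H) (k : ℕ) : Prop :=
  ∀ u : V, (C.L u).card = k

/-- `G` admits an `(H, L)`-coloring: an independent set of `H` meeting each `L u` exactly once. -/
def DPCover.HasColoring {V W : Type*} {G : SimpleGraph V} {H : SimpleGraph W}
    (C : DPCover G H) : Prop :=
  ∃ I : Set W, (∀ x ∈ I, ∀ y ∈ I, ¬ H.Adj x y) ∧ (∀ u : V, ∃! x : W, x ∈ I ∧ x ∈ C.L u)

/-- `G` admits a coloring with respect to every `k`-fold cover; `χ_DP(G)` is the least such `k`. -/
def DPColorable {V : Type*} (G : SimpleGraph V) (k : ℕ) : Prop :=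
  ∀ (W : Type) (H : SimpleGraph W) (C : DPCover G H), C.IsFold k → C.HasColoring


/-- K_{3,6}: vertices 0,1,2 on one side, 3..8 on the other. -/
def G9 : SimpleGraph (Fin 9) where
  Adj u v := (u.val < 3 ∧ 3 ≤ v.val) ∨ (v.val < 3 ∧ 3 ≤ u.val)
  symm := by constructor; intro u v h; tauto
  loopless := by constructor; intro u h; rcases h with ⟨h1, h2⟩ | ⟨h1, h2⟩ <;> omega

/-- shift table for the bad cover -/
def sh (u v : Fin 9) : ZMod 3 :=
  if u.val = 1 then (if 6 ≤ v.val then 1 else 0)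
  else if u.val = 2 then ((v.val % 3 : ℕ) : ZMod 3)
  else 0

abbrev W9 := Fin 9 × ZMod 3

def hadj (x y : W9) : Prop :=
  (x.1 = y.1 ∧ x.2 ≠ y.2) ∨
  (x.1.val < 3 ∧ 3 ≤ y.1.val ∧ y.2 = x.2 + sh x.1 y.1) ∨
  (y.1.val < 3 ∧ 3 ≤ x.1.val ∧ x.2 = y.2 + sh y.1 x.1)

instance : DecidablePred (fun p : W9 × W9 => hadj p.1 p.2) := by
  unfold hadj; infer_instance

instance hadjDec : ∀ x y : W9, Decidable (hadj x y) := by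
  intro x y; unfold hadj; infer_instance

def H9 : SimpleGraph W9 where
  Adj := hadj
  symm := by
    constructor
    intro x y h
    rcases h with ⟨h1, h2⟩ | h | h
    · exact Or.inl ⟨h1.symm, h2.symm⟩
    · exact Or.inr (Or.inr h)
    · exact Or.inr (Or.inl h)
  loopless := by
    constructor
    intro x h
    rcases h with ⟨_, h⟩ | ⟨h1, h2, _⟩ | ⟨h1, h2, _⟩
    · exact h rfl
    · omega
    · omega

def L9 (u : Fin 9) : Finset W9 := Finset.univ.filter (fun w => w.1 = u)

lemma memL9 {w : W9} {u : Fin 9} : w ∈ L9 u ↔ w.1 = u := by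
  simp [L9]

def C9 : DPCover G9 H9 where
  L := L9
  part w := ⟨w.1, memL9.mpr rfl, fun u hu => (memL9.mp hu).symm⟩
  clique := by
    intro u x hx y hy hxy
    rw [memL9] at hx hy
    refine Or.inl ⟨hx.trans hy.symm, fun h => hxy ?_⟩
    exact Prod.ext (hx.trans hy.symm) h
  cross := by
    intro u v x hx y hy h
    rw [memL9] at hx hy
    subst hx; subst hy
    rcases h with ⟨h1, _⟩ | ⟨h1, h2, _⟩ | ⟨h1, h2, _⟩
    · exact Or.inl h1
    · exact Or.inr (Or.inl ⟨h1, h2⟩)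
    · exact Or.inr (Or.inr ⟨h1, h2⟩)
  matching := by
    intro u v huv x hx y hy y' hy' h h'
    rw [memL9] at hx hy hy'
    have hne : u ≠ v := G9.ne_of_adj huv
    rcases huv with ⟨hu3, hv3⟩ | ⟨hv3, hu3⟩
    · -- u on left, v on right
      have e : y.2 = x.2 + sh x.1 y.1 := by
        rcases h with ⟨h1, _⟩ | ⟨_, _, h3⟩ | ⟨h1, _, _⟩
        · exact absurd (hx ▸ hy ▸ h1) hne
        · exact h3
        · omega
      have e' : y'.2 = x.2 + sh x.1 y'.1 := by
        rcases h' with ⟨h1, _⟩ | ⟨_, _, h3⟩ | ⟨h1, _, _⟩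
        · exact absurd (hx ▸ hy' ▸ h1) hne
        · exact h3
        · omega
      refine Prod.ext (hy.trans hy'.symm) ?_
      rw [e, e', hy, hy']
    · -- u on right, v on left
      have e : x.2 = y.2 + sh y.1 x.1 := by
        rcases h with ⟨h1, _⟩ | ⟨h1, _, _⟩ | ⟨_, _, h3⟩
        · exact absurd (hx ▸ hy ▸ h1) hne
        · omega
        · exact h3
      have e' : x.2 = y'.2 + sh y'.1 x.1 := by
        rcases h' with ⟨h1, _⟩ | ⟨h1, _, _⟩ | ⟨_, _, h3⟩
        · exact absurd (hx ▸ hy' ▸ h1) hne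
        · omega
        · exact h3
      refine Prod.ext (hy.trans hy'.symm) ?_
      rw [hy] at e
      rw [hy'] at e'
      exact add_right_cancel (e.symm.trans e')

lemma isfold3 : C9.IsFold 3 := by
  intro u
  show (L9 u).card = 3
  revert u; decide

lemma key3 : ∀ a b c : ZMod 3, ∃ v : Fin 9, 3 ≤ v.val ∧
    ∀ k : ZMod 3, k = a + sh 0 v ∨ k = b + sh 1 v ∨ k = c + sh 2 v := by decide

lemma notcol : ¬ C9.HasColoring := by
  rintro ⟨I, hind, hun⟩
  choose g hgI hgL using fun u => (hun u).exists
  have hg1 : ∀ u, (g u).1 = u := fun u => memL9.mp (hgL u)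
  obtain ⟨v, hv3, hcov⟩ := key3 (g 0).2 (g 1).2 (g 2).2
  have hvne : ∀ i : Fin 9, i.val < 3 → H9.Adj (g i) (g v) → False := by
    intro i hi h
    exact hind _ (hgI i) _ (hgI v) h
  rcases hcov (g v).2 with hk | hk | hk
  · exact hvne 0 (by decide) (Or.inr (Or.inl (by rw [hg1, hg1]; exact ⟨by decide, hv3, hk⟩)))
  · exact hvne 1 (by decide) (Or.inr (Or.inl (by rw [hg1, hg1]; exact ⟨by decide, hv3, hk⟩)))
  · exact hvne 2 (by decide) (Or.inr (Or.inl (by rw [hg1, hg1]; exact ⟨by decide, hv3, hk⟩)))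

lemma col2 : G9.Colorable 2 := by
  refine ⟨SimpleGraph.Coloring.mk (fun u => if u.val < 3 then 0 else 1) ?_⟩
  intro u v h
  rcases h with ⟨h1, h2⟩ | ⟨h1, h2⟩ <;>
    simp [h1, h2, Nat.not_lt.mpr h2]

lemma fin3cases (u : Fin 9) (h : u.val < 3) : u = 0 ∨ u = 1 ∨ u = 2 := by
  have h0 : u.val = 0 ∨ u.val = 1 ∨ u.val = 2 := by omega
  rcases h0 with h0 | h0 | h0
  · exact Or.inl (Fin.ext h0)
  · exact Or.inr (Or.inl (Fin.ext h0))
  · exact Or.inr (Or.inr (Fin.ext h0))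

lemma upper : DPColorable G9 4 := by
  intro W H C hfold
  classical
  have hne : ∀ u : Fin 9, (C.L u).Nonempty :=
    fun u => Finset.card_pos.mp (by rw [hfold u]; norm_num)
  have step : ∀ n : ℕ, n ≤ 9 → ∃ c : Fin 9 → W,
      (∀ u : Fin 9, c u ∈ C.L u) ∧
      (∀ u v : Fin 9, u.val < n → v.val < n → u ≠ v → ¬ H.Adj (c u) (c v)) := by
    intro n
    induction n with
    | zero =>
      intro _
      exact ⟨fun u => (hne u).choose, fun u => (hne u).choose_spec,
        fun u v hu => absurd hu (by omega)⟩
    | succ n ih =>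
      intro hn9
      obtain ⟨c, hcL, hcA⟩ := ih (by omega)
      set w : Fin 9 := ⟨n, by omega⟩ with hw
      set B : Finset W := (C.L w).filter (fun y => ∃ u : Fin 9, u.val < n ∧ H.Adj (c u) y)
        with hB
      have hBw : ∀ y ∈ B, ∃ u : Fin 9, u.val < n ∧ G9.Adj u w ∧ H.Adj (c u) y := by
        intro y hy
        rw [hB, Finset.mem_filter] at hy
        obtain ⟨hyL, u, hu, hadj⟩ := hy
        rcases C.cross u w (c u) (hcL u) y hyL hadj with he | hG
        · exfalso; rw [he] at hu; simp [hw] at hu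
        · exact ⟨u, hu, hG, hadj⟩
      have hcardB : B.card ≤ 3 := by
        by_cases h3n : 3 ≤ n
        · set S : Fin 9 → Finset W := fun i => (C.L w).filter (fun y => H.Adj (c i) y) with hS
          have hsub : B ⊆ S 0 ∪ S 1 ∪ S 2 := by
            intro y hy
            have hyL : y ∈ C.L w := (Finset.mem_filter.mp (hB ▸ hy)).1
            obtain ⟨u, hu, hG, hadj⟩ := hBw y hy
            have hu3 : u.val < 3 := by
              rcases hG with ⟨h1, _⟩ | ⟨h1, h2⟩
              · exact h1
              · exfalso; simp [hw] at h1 h2; omega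
            have hymem : y ∈ S u := Finset.mem_filter.mpr ⟨hyL, hadj⟩
            rcases fin3cases u hu3 with rfl | rfl | rfl
            · exact Finset.mem_union_left _ (Finset.mem_union_left _ hymem)
            · exact Finset.mem_union_left _ (Finset.mem_union_right _ hymem)
            · exact Finset.mem_union_right _ hymem
          have hS1 : ∀ i : Fin 9, i.val < 3 → (S i).card ≤ 1 := by
            intro i hi
            apply Finset.card_le_one.mpr
            intro y hy y' hy'
            rw [hS, Finset.mem_filter] at hy hy'
            have hGiw : G9.Adj i w := Or.inl ⟨hi, by simp [hw]; omega⟩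
            exact C.matching i w hGiw (c i) (hcL i) y hy.1 y' hy'.1 hy.2 hy'.2
          calc B.card ≤ (S 0 ∪ S 1 ∪ S 2).card := Finset.card_le_card hsub
            _ ≤ (S 0 ∪ S 1).card + (S 2).card := Finset.card_union_le _ _
            _ ≤ (S 0).card + (S 1).card + (S 2).card :=
                Nat.add_le_add_right (Finset.card_union_le _ _) _
            _ ≤ 1 + 1 + 1 := by
                have := hS1 0 (by decide); have := hS1 1 (by decide)
                have := hS1 2 (by decide); omega
            _ = 3 := rfl
        · have : B = ∅ := by
            apply Finset.eq_empty_of_forall_notMem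
            intro y hy
            obtain ⟨u, hu, hG, _⟩ := hBw y hy
            rcases hG with ⟨h1, h2⟩ | ⟨h1, h2⟩
            · simp [hw] at h2; omega
            · omega
          rw [this]; simp
      have hex : ∃ y ∈ C.L w, y ∉ B := by
        by_contra hcon
        push_neg at hcon
        have : C.L w ⊆ B := hcon
        have := Finset.card_le_card this
        rw [hfold w] at this; omega
      obtain ⟨y, hyL, hyB⟩ := hex
      have hynadj : ∀ u : Fin 9, u.val < n → ¬ H.Adj (c u) y := by
        intro u hu hadj
        exact hyB (Finset.mem_filter.mpr ⟨hyL, u, hu, hadj⟩)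
      refine ⟨Function.update c w y, ?_, ?_⟩
      · intro u
        by_cases h : u = w
        · rw [h, Function.update_self]; exact hyL
        · rw [Function.update_of_ne h]; exact hcL u
      · intro u v hu hv huv
        by_cases hu' : u = w
        · subst hu'
          have hvw : v ≠ w := fun h => huv h.symm
          have hvn : v.val < n := by
            rcases Nat.lt_succ_iff_lt_or_eq.mp hv with h | h
            · exact h
            · exact absurd (Fin.ext h : v = w) hvw
          rw [Function.update_self, Function.update_of_ne hvw]
          intro hadj
          exact hynadj v hvn (H.symm.symm _ _ hadj)
        · by_cases hv' : v = w
          · subst hv'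
            have hun : u.val < n := by
              rcases Nat.lt_succ_iff_lt_or_eq.mp hu with h | h
              · exact h
              · exact absurd (Fin.ext h : u = w) hu'
            rw [Function.update_self, Function.update_of_ne hu']
            exact hynadj u hun
          · rw [Function.update_of_ne hu', Function.update_of_ne hv']
            have hun : u.val < n := by
              rcases Nat.lt_succ_iff_lt_or_eq.mp hu with h | h
              · exact h
              · exact absurd (Fin.ext h : u = w) hu'
            have hvn : v.val < n := by
              rcases Nat.lt_succ_iff_lt_or_eq.mp hv with h | h
              · exact h
              · exact absurd (Fin.ext h : v = w) hv'
            exact hcA u v hun hvn huv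
  obtain ⟨c, hcL, hcA⟩ := step 9 le_rfl
  refine ⟨Set.range c, ?_, ?_⟩
  · rintro x ⟨u, rfl⟩ y ⟨v, rfl⟩ hadj
    by_cases huv : u = v
    · subst huv; exact H.loopless.irrefl _ hadj
    · exact hcA u v u.isLt v.isLt huv hadj
  · intro u
    refine ⟨c u, ⟨⟨u, rfl⟩, hcL u⟩, ?_⟩
    rintro x ⟨⟨v, rfl⟩, hxL⟩
    obtain ⟨u', _, huniq⟩ := C.part (c v)
    have h1 : u = u' := huniq u hxL
    have h2 : v = u' := huniq v (hcL v)
    rw [h1.trans h2.symm]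

/-- There is a finite bipartite simple graph with DP-chromatic number exactly 4:
some 3-fold cover admits no coloring, while every 4-fold cover admits a coloring. -/
theorem exists_bipartite_with_DP_chromatic_number_four :
    ∃ (V : Type) (_ : Fintype V) (G : SimpleGraph V),
      G.Colorable 2 ∧
      (∃ (W : Type) (H : SimpleGraph W) (C : DPCover G H),
        C.IsFold 3 ∧ ¬ C.HasColoring) ∧
      DPColorable G 4 := by
  exact ⟨Fin 9, inferInstance, G9, col2, ⟨W9, H9, C9, isfold3, notcol⟩, upper⟩
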